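/- Let f : ℤ_p → ℤ_p be a surjective 1-Lipschitz map such that for every n, the induced map f_{/n} on ℤ/p^nℤ has a full cycle. Then the dynamical system (ℤ_p, f) is topologically conjugate to the odometer T(x) = x + 1 on ℤ_p: there exists a homeomorphism Ψ : ℤ_p → ℤ_p with Ψ ∘ f = T ∘ Ψ. -/

import Mathlib

lemma aux_cycle {α : Type*} [Fintype α] (g : α → α)
    (hall : ∀ a : α, Set.range (fun k : ℕ => g^[k] a) = Set.univ) (a : α) (j k : ℕ) :
    g^[j] a = g^[k] a ↔ j % Fintype.card α = k % Fintype.card α := by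
  classical
  set N := Fintype.card α with hN
  have gsurj : Function.Surjective g := by
    intro x
    have hx : x ∈ Set.range (fun k : ℕ => g^[k] (g x)) := by rw [hall]; trivial
    obtain ⟨m, hm⟩ := hx
    cases m with
    | zero => exact ⟨x, hm⟩
    | succ m => exact ⟨g^[m] (g x), by rw [← Function.iterate_succ_apply' g m (g x)]; exact hm⟩
  have gbij : Function.Bijective g := Finite.surjective_iff_bijective.mp gsurj
  have hinj_it : ∀ m, Function.Injective (g^[m]) := fun m => gbij.injective.iterate m
  -- find a period d with 0 < d ≤ N
  have hcard : Fintype.card α < Fintype.card (Fin (N + 1)) := by simp [hN]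
  obtain ⟨i, j', hne, heq⟩ := Fintype.exists_ne_map_eq_of_card_lt (fun i : Fin (N + 1) => g^[(i : ℕ)] a) hcard
  wlog hij : (i : ℕ) < (j' : ℕ) generalizing i j'
  · exact this j' i hne.symm heq.symm (by omega)
  set d := (j' : ℕ) - (i : ℕ) with hd
  have hdpos : 0 < d := by omega
  have hdle : d ≤ N := by omega
  have hper : g^[d] a = a := by
    apply hinj_it (i : ℕ)
    rw [← Function.iterate_add_apply]
    have : (i:ℕ) + d = (j' : ℕ) := by omega
    rw [this]
    exact heq.symm
  have hperq : ∀ q, g^[d * q] a = a := by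
    intro q
    induction q with
    | zero => simp
    | succ q ih => rw [Nat.mul_succ, Function.iterate_add_apply, hper, ih]
  have hmod : ∀ m : ℕ, g^[m] a = g^[m % d] a := by
    intro m
    conv_lhs => rw [← Nat.div_add_mod m d, add_comm, Function.iterate_add_apply, hperq]
  have esurj : Function.Surjective (fun m : Fin d => g^[(m : ℕ)] a) := by
    intro x
    have hx : x ∈ Set.range (fun k : ℕ => g^[k] a) := by rw [hall]; trivial
    obtain ⟨m, hm⟩ := hx
    exact ⟨⟨m % d, Nat.mod_lt _ hdpos⟩, by simpa using (hmod m).symm.trans hm⟩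
  have hNd : N ≤ d := by simpa [hN] using Fintype.card_le_of_surjective _ esurj
  have hdN : d = N := le_antisymm hdle hNd
  have einj : Function.Injective (fun m : Fin d => g^[(m : ℕ)] a) := by
    have := (Fintype.bijective_iff_surjective_and_card (fun m : Fin d => g^[(m : ℕ)] a)).mpr
      ⟨esurj, by simp [hdN, hN]⟩
    exact this.injective
  constructor
  · intro h
    rw [hmod j, hmod k] at h
    have := einj (a₁ := ⟨j % d, Nat.mod_lt _ hdpos⟩) (a₂ := ⟨k % d, Nat.mod_lt _ hdpos⟩) h
    simpa [hdN] using congrArg Fin.val this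
  · intro h
    rw [hmod j, hmod k, hdN, h]

open PadicInt Filter Topology

theorem stmt9 (p : ℕ) [Fact p.Prime] (f : ℤ_[p] → ℤ_[p])
    (hlip : ∀ x y : ℤ_[p], ‖f y - f x‖ ≤ ‖y - x‖)
    (hsurj : Function.Surjective f)
    (hcycle : ∀ (n : ℕ) (g : ZMod (p ^ n) → ZMod (p ^ n)),
      (∀ x : ℤ_[p], g (PadicInt.toZModPow n x) = PadicInt.toZModPow n (f x)) →
        ∀ a : ZMod (p ^ n), Set.range (fun k : ℕ => g^[k] a) = Set.univ) :
    ∃ Ψ : ℤ_[p] ≃ₜ ℤ_[p], ∀ x : ℤ_[p], Ψ (f x) = Ψ x + 1 := by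
  classical
  have hp : p.Prime := Fact.out
  have hcong : ∀ (n : ℕ) (x y : ℤ_[p]),
      toZModPow n x = toZModPow n y ↔ ‖x - y‖ ≤ (p:ℝ)^(-(n:ℤ)) := by
    intro n x y
    rw [norm_le_pow_iff_mem_span_pow, ← ker_toZModPow, RingHom.mem_ker, map_sub, sub_eq_zero]
  set g : ∀ n, ZMod (p^n) → ZMod (p^n) :=
    fun n a => toZModPow n (f ((a.val : ℤ_[p]))) with hgdef
  have hg : ∀ n (x : ℤ_[p]), g n (toZModPow n x) = toZModPow n (f x) := by
    intro n x
    have h1 : toZModPow n (((toZModPow n x).val : ℤ_[p])) = toZModPow n x := by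
      rw [map_natCast, ZMod.natCast_zmod_val]
    exact (hcong n _ _).mpr (le_trans (hlip _ _) ((hcong n _ _).mp h1))
  have hmod : ∀ n (j k : ℕ), (g n)^[j] 0 = (g n)^[k] 0 ↔ j % p^n = k % p^n := by
    intro n j k
    have := aux_cycle (g n) (hcycle n (g n) (hg n)) 0 j k
    rwa [ZMod.card] at this
  have hiter : ∀ n (k : ℕ) (x : ℤ_[p]),
      toZModPow n (f^[k] x) = (g n)^[k] (toZModPow n x) := by
    intro n k
    induction k with
    | zero => simp
    | succ k ih =>
      intro x
      rw [Function.iterate_succ_apply' f, Function.iterate_succ_apply' (g n), ← hg, ih]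
  set K : ∀ (n : ℕ), ℤ_[p] → ℕ := fun n y => (toZModPow n y).val with hKdef
  have hKcast : ∀ n y, ((K n y : ℕ) : ZMod (p^n)) = toZModPow n y :=
    fun n y => ZMod.natCast_zmod_val _
  have hKmod : ∀ (m n : ℕ) (y : ℤ_[p]), m ≤ n → K n y % p^m = K m y % p^m := by
    intro m n y h
    have h1 : ((K n y : ℕ) : ZMod (p^m)) = ((K m y : ℕ) : ZMod (p^m)) := by
      rw [hKcast m y, ← cast_toZModPow m n h y, ← hKcast n y]
      exact (ZMod.cast_natCast (pow_dvd_pow p h) _).symm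
    exact (ZMod.natCast_eq_natCast_iff _ _ _).mp h1
  set u : ℤ_[p] → ℕ → ℤ_[p] := fun y n => f^[K n y] 0 with hudef
  have hu_proj : ∀ (y : ℤ_[p]) (m n : ℕ), m ≤ n →
      toZModPow m (u y n) = (g m)^[K m y] 0 := by
    intro y m n h
    rw [hudef]
    simp only
    rw [hiter m _ 0, map_zero]
    exact (hmod m _ _).mpr (hKmod m n y h)
  have hb0 : Tendsto (fun n : ℕ => (p:ℝ)^(-(n:ℤ))) atTop (𝓝 0) := by
    have : ∀ n : ℕ, (p:ℝ)^(-(n:ℤ)) = ((p:ℝ)⁻¹)^n := by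
      intro n; rw [zpow_neg, zpow_natCast, inv_pow]
    simp only [this]
    apply tendsto_pow_atTop_nhds_zero_of_lt_one
    · positivity
    · rw [inv_lt_one_iff₀]; right; exact_mod_cast hp.one_lt
  have hcauchy : ∀ y, CauchySeq (u y) := by
    intro y
    refine cauchySeq_of_le_tendsto_0 (fun n : ℕ => (p:ℝ)^(-(n:ℤ))) ?_ hb0
    intro n m N hn hm
    rw [dist_eq_norm]
    apply (hcong N _ _).mp
    rw [hu_proj y N n hn, hu_proj y N m hm]
  choose Phi hPhi using fun y => cauchySeq_tendsto_of_complete (hcauchy y)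
  have hPhi_proj : ∀ (y : ℤ_[p]) (m : ℕ), toZModPow m (Phi y) = (g m)^[K m y] 0 := by
    intro y m
    obtain ⟨N, hN⟩ := Metric.tendsto_atTop.mp (hPhi y) ((p:ℝ)^(-(m:ℤ)))
      (zpow_pos (by exact_mod_cast hp.pos) _)
    have h2 := hN (max m N) (le_max_right _ _)
    rw [dist_eq_norm] at h2
    have h3 : toZModPow m (u y (max m N)) = toZModPow m (Phi y) :=
      (hcong m _ _).mpr (le_of_lt h2)
    rw [← h3, hu_proj y m (max m N) (le_max_left _ _)]
  have hKlt : ∀ (m : ℕ) (y : ℤ_[p]), K m y < p^m := by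
    intro m y
    haveI : NeZero (p^m) := ⟨pow_ne_zero m hp.ne_zero⟩
    exact ZMod.val_lt _
  have hconj : ∀ y, Phi (y + 1) = f (Phi y) := by
    intro y
    rw [← ext_of_toZModPow]
    intro m
    rw [hPhi_proj, ← hg m (Phi y), hPhi_proj, ← Function.iterate_succ_apply' (g m) (K m y) 0]
    apply (hmod m _ _).mpr
    have h1 : ((K m (y+1) : ℕ) : ZMod (p^m)) = ((K m y + 1 : ℕ) : ZMod (p^m)) := by
      push_cast
      rw [hKcast, hKcast, map_add, map_one]
    exact (ZMod.natCast_eq_natCast_iff _ _ _).mp h1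
  have hKeq : ∀ (m : ℕ) (y y' : ℤ_[p]), toZModPow m y = toZModPow m y' → K m y = K m y' := by
    intro m y y' h
    rw [hKdef]
    simp only [h]
  have hinj : Function.Injective Phi := by
    intro y y' h
    rw [← ext_of_toZModPow]
    intro m
    have h2 : (g m)^[K m y] 0 = (g m)^[K m y'] 0 := by
      rw [← hPhi_proj, ← hPhi_proj, h]
    have h3 := (hmod m _ _).mp h2
    rw [Nat.mod_eq_of_lt (hKlt m y), Nat.mod_eq_of_lt (hKlt m y')] at h3
    rw [← hKcast m y, ← hKcast m y', h3]
  have hlipPhi : ∀ y y', ‖Phi y - Phi y'‖ ≤ ‖y - y'‖ := by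
    intro y y'
    rcases eq_or_ne y y' with rfl | hne
    · simp
    have hvn : (0:ℤ) ≤ ((y - y').valuation : ℤ) := Int.natCast_nonneg _
    set m : ℕ := (y - y').valuation with hm
    have hnorm : ‖y - y'‖ = (p:ℝ)^(-(m:ℤ)) := by
      rw [PadicInt.norm_eq_zpow_neg_valuation (sub_ne_zero.mpr hne), hm]
    rw [hnorm]
    apply (hcong m _ _).mp
    have h1 : toZModPow m y = toZModPow m y' := (hcong m _ _).mpr (le_of_eq hnorm)
    rw [hPhi_proj, hPhi_proj, hKeq m y y' h1]
  have cont : Continuous Phi := by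
    have : LipschitzWith 1 Phi := by
      apply LipschitzWith.of_dist_le_mul
      intro x y
      simp only [NNReal.coe_one, one_mul, dist_eq_norm]
      exact hlipPhi x y
    exact this.continuous
  have hPhiNat : ∀ (m k : ℕ), toZModPow m (Phi ((k : ℕ) : ℤ_[p])) = (g m)^[k] 0 := by
    intro m k
    rw [hPhi_proj]
    apply (hmod m _ _).mpr
    have h1 : ((K m ((k : ℕ) : ℤ_[p]) : ℕ) : ZMod (p^m)) = ((k : ℕ) : ZMod (p^m)) := by
      rw [hKcast, map_natCast]
    exact (ZMod.natCast_eq_natCast_iff _ _ _).mp h1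
  have hsurjPhi : Function.Surjective Phi := by
    intro x
    have hx : x ∈ closure (Set.range Phi) := by
      rw [Metric.mem_closure_iff]
      intro ε hε
      obtain ⟨m, hm⟩ := PadicInt.exists_pow_neg_lt p hε
      have hr : (toZModPow m x) ∈ Set.range (fun k : ℕ => (g m)^[k] (0 : ZMod (p^m))) := by
        rw [hcycle m (g m) (hg m) 0]; trivial
      obtain ⟨k, hk⟩ := hr
      refine ⟨Phi ((k : ℕ) : ℤ_[p]), ⟨_, rfl⟩, ?_⟩
      rw [dist_eq_norm]
      calc ‖x - Phi ((k : ℕ) : ℤ_[p])‖ ≤ (p:ℝ)^(-(m:ℤ)) := by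
            apply (hcong m _ _).mp
            rw [hPhiNat m k, ← hk]
        _ < ε := hm
    rwa [((isCompact_range cont).isClosed).closure_eq] at hx
  let E : ℤ_[p] ≃ ℤ_[p] := Equiv.ofBijective Phi ⟨hinj, hsurjPhi⟩
  have hEc : Continuous E := cont
  let H : ℤ_[p] ≃ₜ ℤ_[p] := hEc.homeoOfEquivCompactToT2
  refine ⟨H.symm, fun x => ?_⟩
  have hHx : Phi (H.symm x) = x := H.apply_symm_apply x
  have h2 : f x = Phi (H.symm x + 1) := by
    conv_lhs => rw [← hHx]
    rw [hconj]
  rw [h2]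
  exact H.symm_apply_apply _
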